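/- Let a,b ∈ 𝔹² with a ≠ b, and set m = (a(1+|b|²) + b(1+|a|²))/(|1 + a·conj(b)|·√((1+|a|²)(1+|b|²)) − |ab|² + 1). Then m is the chordal midpoint of a and b: q(a,m) = q(b,m), and π(m) is the midpoint of the shorter arc between π(a) and π(b) of the great circle through them, in the sense that there exists a real λ > 0 with π(m) − (0,0,1/2) = λ·((π(a) − (0,0,1/2)) + (π(b) − (0,0,1/2))). -/

import Mathlib

set_option maxRecDepth 10000
set_option maxHeartbeats 1000000

open ComplexConjugate

private lemma key_aux (ar ai br bi P S D : ℝ)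
    (hP : P ^ 2 = (1 + ar * br + ai * bi) ^ 2 + (ai * br - ar * bi) ^ 2)
    (hS : S ^ 2 = (1 + (ar ^ 2 + ai ^ 2)) * (1 + (br ^ 2 + bi ^ 2)))
    (hD : D = P * S - (ar ^ 2 + ai ^ 2) * (br ^ 2 + bi ^ 2) + 1) :
    (ar * (1 + (br ^ 2 + bi ^ 2)) + br * (1 + (ar ^ 2 + ai ^ 2))) ^ 2 +
      (ai * (1 + (br ^ 2 + bi ^ 2)) + bi * (1 + (ar ^ 2 + ai ^ 2))) ^ 2 =
    D ^ 2 + 2 * D * ((ar ^ 2 + ai ^ 2) * (br ^ 2 + bi ^ 2) - 1) := by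
  subst hD
  linear_combination (-( (1 + (ar^2+ai^2)) * (1 + (br^2+bi^2)) )) * hP + (-(P^2)) * hS

private lemma sq_aux (ar ai br bi p q D : ℝ) (hD : D ≠ 0)
    (hkey : p ^ 2 + q ^ 2 = D ^ 2 + 2 * D * ((ar ^ 2 + ai ^ 2) * (br ^ 2 + bi ^ 2) - 1))
    (hp : p = ar * (1 + (br ^ 2 + bi ^ 2)) + br * (1 + (ar ^ 2 + ai ^ 2)))
    (hq : q = ai * (1 + (br ^ 2 + bi ^ 2)) + bi * (1 + (ar ^ 2 + ai ^ 2))) :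
    ((ar - p / D) ^ 2 + (ai - q / D) ^ 2) * (1 + (br ^ 2 + bi ^ 2)) =
      ((br - p / D) ^ 2 + (bi - q / D) ^ 2) * (1 + (ar ^ 2 + ai ^ 2)) := by
  field_simp
  linear_combination (-(ar ^ 2 + ai ^ 2 - br ^ 2 - bi ^ 2)) * hkey +
    (-2 * D * (ar * (1 + br ^ 2 + bi ^ 2) - br * (1 + ar ^ 2 + ai ^ 2))) * hp +
    (-2 * D * (ai * (1 + br ^ 2 + bi ^ 2) - bi * (1 + ar ^ 2 + ai ^ 2))) * hq

private lemma comp1_aux (ar ai br bi p q D : ℝ) (hD : 0 < D)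
    (hp : p = ar * (1 + (br ^ 2 + bi ^ 2)) + br * (1 + (ar ^ 2 + ai ^ 2))) :
    p / D / (1 + (p ^ 2 + q ^ 2) / D ^ 2) =
      (1 + (ar ^ 2 + ai ^ 2)) * (1 + (br ^ 2 + bi ^ 2)) / ((1 + (p ^ 2 + q ^ 2) / D ^ 2) * D) *
        (ar / (1 + (ar ^ 2 + ai ^ 2)) + br / (1 + (br ^ 2 + bi ^ 2))) := by
  have hA : (0:ℝ) < 1 + (ar ^ 2 + ai ^ 2) := by positivity
  have hB : (0:ℝ) < 1 + (br ^ 2 + bi ^ 2) := by positivity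
  have hM : (0:ℝ) < 1 + (p ^ 2 + q ^ 2) / D ^ 2 := by positivity
  field_simp
  linear_combination hp

private lemma comp3_aux (ar ai br bi p q D : ℝ) (hD : 0 < D)
    (hkey : p ^ 2 + q ^ 2 = D ^ 2 + 2 * D * ((ar ^ 2 + ai ^ 2) * (br ^ 2 + bi ^ 2) - 1)) :
    (p ^ 2 + q ^ 2) / D ^ 2 / (1 + (p ^ 2 + q ^ 2) / D ^ 2) - 1 / 2 =
      (1 + (ar ^ 2 + ai ^ 2)) * (1 + (br ^ 2 + bi ^ 2)) / ((1 + (p ^ 2 + q ^ 2) / D ^ 2) * D) *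
        ((ar ^ 2 + ai ^ 2) / (1 + (ar ^ 2 + ai ^ 2)) - 1 / 2 +
          ((br ^ 2 + bi ^ 2) / (1 + (br ^ 2 + bi ^ 2)) - 1 / 2)) := by
  have hA : (0:ℝ) < 1 + (ar ^ 2 + ai ^ 2) := by positivity
  have hB : (0:ℝ) < 1 + (br ^ 2 + bi ^ 2) := by positivity
  have hM : (0:ℝ) < 1 + (p ^ 2 + q ^ 2) / D ^ 2 := by positivity
  field_simp
  linear_combination hkey

/-- The chordal (spherical) metric on the complex plane. -/
noncomputable def chordal (x y : ℂ) : ℝ :=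
  ‖x - y‖ /
    (Real.sqrt (1 + ‖x‖ ^ 2) * Real.sqrt (1 + ‖y‖ ^ 2))

/-- The stereographic projection of the complex plane onto the Riemann sphere
with center `(0, 0, 1/2)` and radius `1/2` in `ℝ³`. -/
noncomputable def stereo (z : ℂ) : ℝ × ℝ × ℝ :=
  (z.re / (1 + ‖z‖ ^ 2), z.im / (1 + ‖z‖ ^ 2),
    ‖z‖ ^ 2 / (1 + ‖z‖ ^ 2))

theorem stmt18 (a b : ℂ) (ha : ‖a‖ < 1) (hb : ‖b‖ < 1) (hab : a ≠ b)
    (m : ℂ)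
    (hm : m = (a * (1 + (‖b‖ : ℂ) ^ 2) + b * (1 + (‖a‖ : ℂ) ^ 2)) /
      ((‖1 + a * conj b‖ *
          Real.sqrt ((1 + ‖a‖ ^ 2) * (1 + ‖b‖ ^ 2)) -
        ‖a * b‖ ^ 2 + 1 : ℝ) : ℂ)) :
    chordal a m = chordal b m ∧
    ∃ l : ℝ, 0 < l ∧
      stereo m - ((0 : ℝ), (0 : ℝ), (1 / 2 : ℝ)) =
        l • ((stereo a - ((0 : ℝ), (0 : ℝ), (1 / 2 : ℝ))) +
          (stereo b - ((0 : ℝ), (0 : ℝ), (1 / 2 : ℝ)))) := by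
  have hx : ‖a‖ ^ 2 = a.re ^ 2 + a.im ^ 2 := by
    rw [Complex.sq_norm, Complex.normSq_apply]; ring
  have hy : ‖b‖ ^ 2 = b.re ^ 2 + b.im ^ 2 := by
    rw [Complex.sq_norm, Complex.normSq_apply]; ring
  set P := ‖1 + a * conj b‖ with hPdef
  set S := Real.sqrt ((1 + ‖a‖ ^ 2) * (1 + ‖b‖ ^ 2)) with hSdef
  have hS2 : S ^ 2 = (1 + (a.re ^ 2 + a.im ^ 2)) * (1 + (b.re ^ 2 + b.im ^ 2)) := by
    rw [hSdef, Real.sq_sqrt (by positivity), hx, hy]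
  have hP2 : P ^ 2 = (1 + a.re * b.re + a.im * b.im) ^ 2 + (a.im * b.re - a.re * b.im) ^ 2 := by
    rw [hPdef, Complex.sq_norm, Complex.normSq_apply]
    simp [Complex.add_re, Complex.add_im, Complex.mul_re, Complex.mul_im]
    ring
  set D : ℝ := P * S - ‖a * b‖ ^ 2 + 1 with hDdef
  have hDval : D = P * S - (a.re ^ 2 + a.im ^ 2) * (b.re ^ 2 + b.im ^ 2) + 1 := by
    rw [hDdef, norm_mul, mul_pow, hx, hy]
  have hSpos : 0 < S := Real.sqrt_pos.mpr (by positivity)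
  have hD0 : (0:ℝ) < D := by
    rw [hDdef, norm_mul, mul_pow]
    have h1 : ‖a‖ * ‖b‖ < 1 := by
      nlinarith [norm_nonneg a, norm_nonneg b]
    nlinarith [mul_nonneg (norm_nonneg (1 + a * conj b)) hSpos.le,
      mul_nonneg (norm_nonneg a) (norm_nonneg b)]
  have hDne : D ≠ 0 := ne_of_gt hD0
  have hmre : m.re = (a.re * (1 + (b.re ^ 2 + b.im ^ 2)) + b.re * (1 + (a.re ^ 2 + a.im ^ 2))) / D := by
    rw [hm, Complex.div_ofReal_re]
    simp only [← Complex.ofReal_pow, Complex.add_re, Complex.mul_re, Complex.add_im,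
      Complex.mul_im, Complex.one_re, Complex.one_im, Complex.ofReal_re, Complex.ofReal_im, hx, hy]
    ring
  have hmim : m.im = (a.im * (1 + (b.re ^ 2 + b.im ^ 2)) + b.im * (1 + (a.re ^ 2 + a.im ^ 2))) / D := by
    rw [hm, Complex.div_ofReal_im]
    simp only [← Complex.ofReal_pow, Complex.add_re, Complex.mul_re, Complex.add_im,
      Complex.mul_im, Complex.one_re, Complex.one_im, Complex.ofReal_re, Complex.ofReal_im, hx, hy]
    ring
  have hkey := key_aux a.re a.im b.re b.im P S D hP2 hS2 hDval
  have hmabs : ‖m‖ ^ 2 =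
      ((a.re * (1 + (b.re ^ 2 + b.im ^ 2)) + b.re * (1 + (a.re ^ 2 + a.im ^ 2))) ^ 2 +
        (a.im * (1 + (b.re ^ 2 + b.im ^ 2)) + b.im * (1 + (a.re ^ 2 + a.im ^ 2))) ^ 2) / D ^ 2 := by
    rw [Complex.sq_norm, Complex.normSq_apply, hmre, hmim]
    field_simp
  have hsq : ‖a - m‖ ^ 2 * (1 + ‖b‖ ^ 2) =
      ‖b - m‖ ^ 2 * (1 + ‖a‖ ^ 2) := by
    simp only [Complex.sq_norm, Complex.normSq_apply, Complex.sub_re, Complex.sub_im,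
      hmre, hmim, hx, hy]
    linear_combination sq_aux a.re a.im b.re b.im _ _ D hDne hkey rfl rfl
  constructor
  · have hcross : ‖a - m‖ * Real.sqrt (1 + ‖b‖ ^ 2) =
        ‖b - m‖ * Real.sqrt (1 + ‖a‖ ^ 2) := by
      have h1 : (‖a - m‖ * Real.sqrt (1 + ‖b‖ ^ 2)) ^ 2 =
          (‖b - m‖ * Real.sqrt (1 + ‖a‖ ^ 2)) ^ 2 := by
        rw [mul_pow, mul_pow, Real.sq_sqrt (by positivity), Real.sq_sqrt (by positivity)]
        exact hsq
      have h2 : (0:ℝ) ≤ ‖a - m‖ * Real.sqrt (1 + ‖b‖ ^ 2) := by positivity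
      have h3 : (0:ℝ) ≤ ‖b - m‖ * Real.sqrt (1 + ‖a‖ ^ 2) := by positivity
      rw [← Real.sqrt_sq h2, ← Real.sqrt_sq h3, h1]
    rw [chordal, chordal,
      div_eq_div_iff (by positivity : (0:ℝ) < _).ne' (by positivity : (0:ℝ) < _).ne']
    linear_combination Real.sqrt (1 + ‖m‖ ^ 2) * hcross
  · refine ⟨(1 + ‖a‖ ^ 2) * (1 + ‖b‖ ^ 2) / ((1 + ‖m‖ ^ 2) * D),
      by positivity, ?_⟩
    simp only [stereo, Prod.mk_sub_mk, Prod.smul_mk, Prod.mk_add_mk, smul_eq_mul, Prod.mk.injEq,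
      sub_zero]
    refine ⟨?_, ?_, ?_⟩
    · rw [hmre, hmabs, hx, hy]
      linear_combination comp1_aux a.re a.im b.re b.im _
        (a.im * (1 + (b.re ^ 2 + b.im ^ 2)) + b.im * (1 + (a.re ^ 2 + a.im ^ 2))) D hD0 rfl
    · rw [hmim, hmabs, hx, hy]
      linear_combination comp1_aux a.im a.re b.im b.re
        (a.im * (1 + (b.im ^ 2 + b.re ^ 2)) + b.im * (1 + (a.im ^ 2 + a.re ^ 2)))
        (a.re * (1 + (b.re ^ 2 + b.im ^ 2)) + b.re * (1 + (a.re ^ 2 + a.im ^ 2))) D hD0 rfl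
    · rw [hmabs, hx, hy]
      linear_combination comp3_aux a.re a.im b.re b.im _ _ D hD0 hkey
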